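/- Let G be a finite hierarchically structured collection of measurable groups arranged as a rooted tree with root X ∈ G, let S = ((x_1,y_1),…,(x_n,y_n)) be any sample in X × Y with n_g > 0 for every g ∈ G, let H be a finite nonempty hypothesis class of functions X → Z, let ℓ : Z × Y → [0,1] be any bounded loss function, and let ε_n : G → (0,1) be any error rate function. Then the predictor f : X → Z output by the MGL-Tree algorithm run on these inputs satisfies L_S(f | g) ≤ inf_{h ∈ H} L_S(h | g) + ε_n(g) for all g ∈ G. -/

import Mathlib

open MeasureTheory ProbabilityTheory

open scoped Classical in
noncomputable def numIn {X Y : Type*} {n : ℕ} (S : Fin n → X × Y) (g : Set X) : ℕ :=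
  (Finset.univ.filter (fun i => (S i).1 ∈ g)).card

open scoped Classical in
noncomputable def empRisk {X Y Z : Type*} {n : ℕ} (ℓ : Z → Y → ℝ) (S : Fin n → X × Y)
    (f : X → Z) (g : Set X) : ℝ :=
  (∑ i ∈ Finset.univ.filter (fun i => (S i).1 ∈ g), ℓ (f (S i).1) (S i).2) /
    (numIn S g : ℝ)

/-- A rooted hierarchical tree of groups over the input space `X`, with node
index type `ι`.  The root is the whole space `X`, each non-root node is a
strict subset of its parent (one level deeper), and nodes at the same depth
are pairwise disjoint. -/
structure HTree (X : Type*) (ι : Type*) where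
  set : ι → Set X
  root : ι
  par : ι → ι
  depth : ι → ℕ
  root_set : set root = Set.univ
  root_depth : depth root = 0
  depth_par : ∀ g, g ≠ root → depth g = depth (par g) + 1
  ssubset_par : ∀ g, g ≠ root → set g ⊂ set (par g)
  disj : ∀ g g', g ≠ g' → depth g = depth g' → set g ∩ set g' = ∅

open scoped Classical in
/-- The working predictors `f^g` computed by the MGL-Tree algorithm: the root's working
predictor is the empirical minimizer `ĥ^X`; visiting nodes in breadth-first order (so that
each node is visited after its parent, whose working predictor describes the behavior of the
current decision tree `f_old` on the node), node `g`'s working predictor is set to `ĥ^g` if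
`L_S(f_old | g) - L_S(ĥ^g | g) ≥ ε_n(g)` and is inherited from the parent otherwise. -/
noncomputable def workPred {X Y Z ι : Type*} (T : HTree X ι) (hhat : ι → X → Z)
    (ℓ : Z → Y → ℝ) {n : ℕ} (S : Fin n → X × Y) (ε : ι → ℝ) (g : ι) : X → Z :=
  if h : g = T.root then hhat T.root
  else
    let p := workPred T hhat ℓ S ε (T.par g)
    if empRisk ℓ S p (T.set g) - empRisk ℓ S (hhat g) (T.set g) ≥ ε g then hhat g else p
termination_by T.depth g
decreasing_by
  have := T.depth_par g h
  omega

open scoped Classical in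
/-- The deepest node of the tree `T` containing the point `x`. -/
noncomputable def deepestNode {X ι : Type*} [Fintype ι] (T : HTree X ι) (x : X) : ι :=
  ((Finset.univ.filter (fun g => x ∈ T.set g)).exists_max_image T.depth
    ⟨T.root, by simp [T.root_set]⟩).choose

/-- The final decision tree predictor output by MGL-Tree: on input `x`, predict with the
working predictor of the deepest node of the tree containing `x`. -/
noncomputable def treePredict {X Z ι : Type*} [Fintype ι] (T : HTree X ι)
    (W : ι → X → Z) : X → Z :=
  fun x => W (deepestNode T x) x

open scoped Classical

namespace MGLAux

variable {X Y Z ι : Type*}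

/-- Ancestor at distance `k`: depth and inclusion. -/
lemma anc_prop (T : HTree X ι) (g : ι) :
    ∀ k, k ≤ T.depth g →
      T.depth (T.par^[k] g) = T.depth g - k ∧ T.set g ⊆ T.set (T.par^[k] g) := by
  intro k
  induction k with
  | zero => simp
  | succ k ih =>
    intro hk
    obtain ⟨hd, hs⟩ := ih (by omega)
    have hne : T.par^[k] g ≠ T.root := by
      intro h; rw [h, T.root_depth] at hd; omega
    have h1 := T.depth_par _ hne
    have h2 := T.ssubset_par _ hne
    rw [Function.iterate_succ_apply']
    exact ⟨by omega, hs.trans h2.subset⟩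

/-- Two nodes containing a common point are nested. -/
lemma nested (T : HTree X ι) {g g' : ι} {x : X} (hx : x ∈ T.set g) (hx' : x ∈ T.set g')
    (hd : T.depth g ≤ T.depth g') : T.set g' ⊆ T.set g := by
  obtain ⟨hdep, hsub⟩ := anc_prop T g' (T.depth g' - T.depth g) (by omega)
  have heq : T.par^[T.depth g' - T.depth g] g' = g := by
    by_contra hne
    have hdisj := T.disj _ _ hne (by omega)
    exact absurd hdisj (Set.Nonempty.ne_empty ⟨x, hsub hx', hx⟩)
  rw [← heq]; exact hsub

lemma eq_of_mem_of_depth_eq (T : HTree X ι) {g g' : ι} {x : X} (hx : x ∈ T.set g)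
    (hx' : x ∈ T.set g') (hd : T.depth g = T.depth g') : g = g' := by
  by_contra hne
  exact absurd (T.disj _ _ hne hd) (Set.Nonempty.ne_empty ⟨x, hx, hx'⟩)

lemma deepest_spec [Fintype ι] (T : HTree X ι) (x : X) :
    x ∈ T.set (deepestNode T x) ∧
      ∀ g, x ∈ T.set g → T.depth g ≤ T.depth (deepestNode T x) := by
  unfold deepestNode
  generalize_proofs h
  obtain ⟨h1, h2⟩ := h.choose_spec
  exact ⟨(Finset.mem_filter.mp h1).2,
    fun g hg => h2 g (Finset.mem_filter.mpr ⟨Finset.mem_univ g, hg⟩)⟩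

lemma sum_le_sum_of_empRisk_le {n : ℕ} (ℓ : Z → Y → ℝ) (S : Fin n → X × Y) (g : Set X)
    (hN : 0 < numIn S g) {f1 f2 : X → Z}
    (h : empRisk ℓ S f1 g ≤ empRisk ℓ S f2 g) :
    ∑ i ∈ Finset.univ.filter (fun i => (S i).1 ∈ g), ℓ (f1 (S i).1) (S i).2 ≤
      ∑ i ∈ Finset.univ.filter (fun i => (S i).1 ∈ g), ℓ (f2 (S i).1) (S i).2 := by
  have hN' : (0 : ℝ) < (numIn S g : ℝ) := by exact_mod_cast hN
  rw [empRisk, empRisk, div_le_div_iff_of_pos_right hN'] at h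
  exact h

/-- Step lemma: the working predictor at a non-root node does at least as well on the
node as the parent's working predictor. -/
lemma workPred_le_par {n : ℕ} (T : HTree X ι) (hhat : ι → X → Z) (ℓ : Z → Y → ℝ)
    (S : Fin n → X × Y) (ε : ι → ℝ) (hε : ∀ g, 0 < ε g) (c : ι) (hc : c ≠ T.root) :
    empRisk ℓ S (workPred T hhat ℓ S ε c) (T.set c) ≤
      empRisk ℓ S (workPred T hhat ℓ S ε (T.par c)) (T.set c) := by
  rw [workPred]
  simp only [dif_neg hc]
  split_ifs with h
  · have := hε c
    linarith
  · exact le_refl _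

/-- The working predictor at a node is within `ε` of the empirical minimizer. -/
lemma workPred_le_hhat {n : ℕ} (T : HTree X ι) (hhat : ι → X → Z) (ℓ : Z → Y → ℝ)
    (S : Fin n → X × Y) (ε : ι → ℝ) (hε : ∀ g, 0 < ε g) (g : ι) :
    empRisk ℓ S (workPred T hhat ℓ S ε g) (T.set g) ≤
      empRisk ℓ S (hhat g) (T.set g) + ε g := by
  rw [workPred]
  by_cases hg : g = T.root
  · simp only [dif_pos hg]
    subst hg
    have := hε T.root
    linarith
  · simp only [dif_neg hg]
    split_ifs with h
    · have := hε g; linarith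
    · push_neg at h
      linarith

/-- Key lemma: the output predictor's total loss on a node is at most the working
predictor's total loss on that node. -/
lemma sum_treePredict_le [Fintype ι] {n : ℕ} (T : HTree X ι) (hhat : ι → X → Z)
    (ℓ : Z → Y → ℝ) (S : Fin n → X × Y) (ε : ι → ℝ) (hε : ∀ g, 0 < ε g)
    (hpos : ∀ g : ι, 0 < numIn S (T.set g)) :
    ∀ (k : ℕ) (g : ι), Finset.univ.sup T.depth - T.depth g < k →
      ∑ i ∈ Finset.univ.filter (fun i => (S i).1 ∈ T.set g),
          ℓ (treePredict T (workPred T hhat ℓ S ε) (S i).1) (S i).2 ≤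
        ∑ i ∈ Finset.univ.filter (fun i => (S i).1 ∈ T.set g),
          ℓ (workPred T hhat ℓ S ε g (S i).1) (S i).2 := by
  intro k
  induction k with
  | zero => intro g hg; omega
  | succ k ih =>
    intro g hg
    set M := Finset.univ.sup T.depth with hM
    set w := workPred T hhat ℓ S ε with hw
    set f := treePredict T w with hf
    set A := Finset.univ.filter (fun i => (S i).1 ∈ T.set g) with hA
    -- split into points whose deepest node is g, and the rest
    have hsplit : ∀ (F : X → Z),
        ∑ i ∈ A, ℓ (F (S i).1) (S i).2 =
          (∑ i ∈ A.filter (fun i => deepestNode T (S i).1 = g), ℓ (F (S i).1) (S i).2) +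
          ∑ i ∈ A.filter (fun i => ¬ deepestNode T (S i).1 = g), ℓ (F (S i).1) (S i).2 :=
      fun F => (Finset.sum_filter_add_sum_filter_not A _ _).symm
    rw [hsplit f, hsplit (w g)]
    have hpart1 :
        ∑ i ∈ A.filter (fun i => deepestNode T (S i).1 = g), ℓ (f (S i).1) (S i).2 =
        ∑ i ∈ A.filter (fun i => deepestNode T (S i).1 = g), ℓ (w g (S i).1) (S i).2 := by
      refine Finset.sum_congr rfl fun i hi => ?_
      have := (Finset.mem_filter.mp hi).2
      simp only [hf, treePredict, this]
    rw [hpart1]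
    have hge : ∀ i ∈ A.filter (fun i => ¬ deepestNode T (S i).1 = g),
        T.depth g + 1 ≤ T.depth (deepestNode T (S i).1) := by
      intro i hi
      obtain ⟨hiA, hne⟩ := Finset.mem_filter.mp hi
      have hxi : (S i).1 ∈ T.set g := (Finset.mem_filter.mp hiA).2
      obtain ⟨hmem, hmax⟩ := deepest_spec T (S i).1
      have hle := hmax g hxi
      rcases lt_or_eq_of_le hle with h | h
      · omega
      · exact absurd (eq_of_mem_of_depth_eq T hxi hmem h).symm hne
    -- the "child" node of g containing x_i
    set key : Fin n → ι := fun i =>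
      T.par^[T.depth (deepestNode T (S i).1) - (T.depth g + 1)] (deepestNode T (S i).1)
      with hkey
    have hkeyprop : ∀ i ∈ A.filter (fun i => ¬ deepestNode T (S i).1 = g),
        T.depth (key i) = T.depth g + 1 ∧ (S i).1 ∈ T.set (key i) := by
      intro i hi
      have hd := hge i hi
      obtain ⟨hmem, _⟩ := deepest_spec T (S i).1
      obtain ⟨h1, h2⟩ := anc_prop T (deepestNode T (S i).1)
        (T.depth (deepestNode T (S i).1) - (T.depth g + 1)) (by omega)
      refine ⟨?_, h2 hmem⟩
      show T.depth (T.par^[T.depth (deepestNode T (S i).1) - (T.depth g + 1)]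
        (deepestNode T (S i).1)) = T.depth g + 1
      omega
    set A2 := A.filter (fun i => ¬ deepestNode T (S i).1 = g) with hA2
    have hfib : ∀ (F : X → Z),
        ∑ i ∈ A2, ℓ (F (S i).1) (S i).2 =
          ∑ c ∈ (Finset.univ : Finset ι),
            ∑ i ∈ A2.filter (fun i => key i = c), ℓ (F (S i).1) (S i).2 :=
      fun F => (Finset.sum_fiberwise_of_maps_to (fun i _ => Finset.mem_univ (key i)) _).symm
    rw [hfib f, hfib (w g)]
    refine add_le_add le_rfl (Finset.sum_le_sum fun c _ => ?_)
    rcases Finset.eq_empty_or_nonempty (A2.filter (fun i => key i = c)) with he | ⟨i0, hi0⟩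
    · rw [he]
      simp
    · -- c is a child of g
      obtain ⟨hi0A2, hkey0⟩ := Finset.mem_filter.mp hi0
      obtain ⟨hdc', hxc'⟩ := hkeyprop i0 hi0A2
      have hdc : T.depth c = T.depth g + 1 := by rw [← hkey0]; exact hdc'
      have hxc : (S i0).1 ∈ T.set c := by rw [← hkey0]; exact hxc'
      have hcroot : c ≠ T.root := by
        intro h; rw [h, T.root_depth] at hdc; omega
      have hdpar := T.depth_par c hcroot
      have hsubpar := (T.ssubset_par c hcroot).subset
      have hxg0 : (S i0).1 ∈ T.set g :=
        (Finset.mem_filter.mp (Finset.mem_filter.mp hi0A2).1).2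
      have hparc : T.par c = g :=
        eq_of_mem_of_depth_eq T (hsubpar hxc) hxg0 (by omega)
      have hsubg : T.set c ⊆ T.set g := hparc ▸ hsubpar
      -- identify the fiber
      have hfibeq : A2.filter (fun i => key i = c) =
          Finset.univ.filter (fun i => (S i).1 ∈ T.set c) := by
        ext i
        simp only [Finset.mem_filter, Finset.mem_univ, true_and]
        constructor
        · rintro ⟨hiA2, hk⟩
          have := (hkeyprop i hiA2).2
          rw [hk] at this
          exact this
        · intro hxi
          have hxig : (S i).1 ∈ T.set g := hsubg hxi
          obtain ⟨hmemd, hmaxd⟩ := deepest_spec T (S i).1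
          have hdd : T.depth c ≤ T.depth (deepestNode T (S i).1) := hmaxd c hxi
          have hne : ¬ deepestNode T (S i).1 = g := by
            intro h
            rw [h] at hdd
            omega
          have hiA2 : i ∈ A2 := by
            simp only [hA2, hA, Finset.mem_filter, Finset.mem_univ, true_and]
            exact ⟨hxig, hne⟩
          refine ⟨hiA2, ?_⟩
          obtain ⟨hdk, hxk⟩ := hkeyprop i hiA2
          exact eq_of_mem_of_depth_eq T hxk hxi (by omega)
      rw [hfibeq]
      have hcM : T.depth c ≤ M := Finset.le_sup (Finset.mem_univ c)
      calc ∑ i ∈ Finset.univ.filter (fun i => (S i).1 ∈ T.set c), ℓ (f (S i).1) (S i).2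
          ≤ ∑ i ∈ Finset.univ.filter (fun i => (S i).1 ∈ T.set c),
              ℓ (w c (S i).1) (S i).2 := ih c (by omega)
        _ ≤ ∑ i ∈ Finset.univ.filter (fun i => (S i).1 ∈ T.set c),
              ℓ (w g (S i).1) (S i).2 := by
            refine sum_le_sum_of_empRisk_le ℓ S (T.set c) (hpos c) ?_
            have := workPred_le_par T hhat ℓ S ε hε c hcroot
            rw [hparc] at this
            exact this

end MGLAux

/-- Correctness of MGL-Tree: for any sample, any hierarchical tree of
groups each containing at least one sample point, any finite nonempty hypothesis class,
any bounded loss, and any error-rate function `ε : G → (0,1)`, the predictor output by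
MGL-Tree has group-conditional empirical risk within `ε_n(g)` of the best hypothesis in
`H`, simultaneously for every group `g` in the tree. -/
theorem mglTree_correctness {X Y Z ι : Type*} [Fintype ι]
    (T : HTree X ι)
    (ℓ : Z → Y → ℝ) (hℓ : ∀ z y, ℓ z y ∈ Set.Icc (0 : ℝ) 1)
    {n : ℕ} (S : Fin n → X × Y)
    (hpos : ∀ g : ι, 0 < numIn S (T.set g))
    (H : Finset (X → Z)) (hH : H.Nonempty)
    (ε : ι → ℝ) (hε : ∀ g, ε g ∈ Set.Ioo (0 : ℝ) 1)
    (hhat : ι → X → Z)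
    (hmem : ∀ g, hhat g ∈ H)
    (hmin : ∀ g, ∀ h ∈ H, empRisk ℓ S (hhat g) (T.set g) ≤ empRisk ℓ S h (T.set g)) :
    ∀ g : ι,
      empRisk ℓ S (treePredict T (workPred T hhat ℓ S ε)) (T.set g) ≤
        H.inf' hH (fun h => empRisk ℓ S h (T.set g)) + ε g := by
  intro g
  have hε' : ∀ g, 0 < ε g := fun g => (hε g).1
  have hsum := MGLAux.sum_treePredict_le T hhat ℓ S ε hε' hpos
    (Finset.univ.sup T.depth - T.depth g + 1) g (by omega)
  have hN : (0 : ℝ) < (numIn S (T.set g) : ℝ) := by exact_mod_cast hpos g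
  have h1 : empRisk ℓ S (treePredict T (workPred T hhat ℓ S ε)) (T.set g) ≤
      empRisk ℓ S (workPred T hhat ℓ S ε g) (T.set g) := by
    rw [empRisk, empRisk, div_le_div_iff_of_pos_right hN]
    exact hsum
  have h2 := MGLAux.workPred_le_hhat T hhat ℓ S ε hε' g
  have h3 : empRisk ℓ S (hhat g) (T.set g) ≤
      H.inf' hH (fun h => empRisk ℓ S h (T.set g)) :=
    Finset.le_inf' hH _ (fun h hh => hmin g h hh)
  linarith
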